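/- arXiv:2410.20952 — 3 statements merged into one kernel-verified Lean document; each statement's English description precedes it below -/
import Mathlib

section
/- For all n ≥ 0, the average of L over the nonsimple binary butterfly group B_{2^n} satisfies (3/2)^n ≤ (1/2^{2^n − 1}) · Σ_{σ ∈ B_{2^n}} L(σ) ≤ ((6 + √2)/4)^n. In particular, with N = 2^n, the expected longest increasing subsequence of a uniform nonsimple binary butterfly permutation lies between N^{log₂(3/2)} and N^{log₂(6+√2) − 2}. -/
/-- Kronecker product of permutations: `(i, r) ↦ (σ i, π r)` under the
row-major identification `Fin (a * b) ≃ Fin a × Fin b`. -/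
def permKron {a b : ℕ} (σ : Equiv.Perm (Fin a)) (π : Equiv.Perm (Fin b)) :
    Equiv.Perm (Fin (a * b)) :=
  finProdFinEquiv.symm.trans ((Equiv.prodCongr σ π).trans finProdFinEquiv)

/-- Direct (block) sum of permutations: `(i, r) ↦ (i, π i r)`. -/
def permBlockSum {a b : ℕ} (π : Fin a → Equiv.Perm (Fin b)) :
    Equiv.Perm (Fin (a * b)) :=
  finProdFinEquiv.symm.trans ((Equiv.prodCongrRight π).trans finProdFinEquiv)

/-- The simple `m`-nary butterfly permutations of `Fin (m ^ n)`:
Kronecker products `τ^{a₁} ⊗ ⋯ ⊗ τ^{aₙ}` of powers of the standard `m`-cycle `τ = finRotate m`. -/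
def simpleButterfly (m : ℕ) : (n : ℕ) → Set (Equiv.Perm (Fin (m ^ n)))
  | 0 => {1}
  | n + 1 =>
    {σ | ∃ (a : ℤ) (π : Equiv.Perm (Fin (m ^ n))), π ∈ simpleButterfly m n ∧
      σ = (finCongr (pow_succ' m n).symm).permCongr (permKron (finRotate m ^ a) π)}

/-- The nonsimple `m`-nary butterfly permutations of `Fin (m ^ n)`:
`B₀ = {1}`, `B_{n+1} = {(τ^a ⊗ id) ∘ (σ₁ ⊕ ⋯ ⊕ σ_m) : σᵢ ∈ B_n}`. -/
def nonsimpleButterfly (m : ℕ) : (n : ℕ) → Set (Equiv.Perm (Fin (m ^ n)))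
  | 0 => {1}
  | n + 1 =>
    {σ | ∃ (a : ℤ) (π : Fin m → Equiv.Perm (Fin (m ^ n))),
      (∀ i, π i ∈ nonsimpleButterfly m n) ∧
      σ = (finCongr (pow_succ' m n).symm).permCongr
        (permKron (finRotate m ^ a) 1 * permBlockSum π)}

/-- The length of the longest increasing subsequence of a permutation. -/
noncomputable def LIS {M : ℕ} (σ : Equiv.Perm (Fin M)) : ℕ :=
  sSup {k | ∃ t : Finset (Fin M), t.card = k ∧ StrictMonoOn (⇑σ) ↑t}

/-- The length of the longest decreasing subsequence of a permutation. -/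
noncomputable def LDS {M : ℕ} (σ : Equiv.Perm (Fin M)) : ℕ :=
  sSup {k | ∃ t : Finset (Fin M), t.card = k ∧ StrictAntiOn (⇑σ) ↑t}

/-- The number of cycles in the disjoint cycle decomposition of `σ`,
counting fixed points as cycles of length 1. -/
def numCycles {M : ℕ} (σ : Equiv.Perm (Fin M)) : ℕ :=
  Multiset.card σ.cycleType + (Finset.univ.filter fun x => σ x = x).card

/-- The number of fixed points of `σ`. -/
def numFixed {M : ℕ} (σ : Equiv.Perm (Fin M)) : ℕ :=
  (Finset.univ.filter fun x => σ x = x).card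


section Blocks
variable {K : ℕ}

def iota (x : Fin 2 × Fin K) : Fin (2 * K) := finProdFinEquiv x

lemma fin2_aux {i : Fin 2} : ¬ i = 0 ↔ i = 1 := by omega
lemma fin2_aux' {i : Fin 2} : ¬ i = 1 ↔ i = 0 := by omega

lemma apply_iota (g : Equiv.Perm (Fin 2)) (π : Fin 2 → Equiv.Perm (Fin K)) (i : Fin 2)
    (r : Fin K) :
    (permKron g (1 : Equiv.Perm (Fin K)) * permBlockSum π) (iota (i, r)) = iota (g i, π i r) := by
  simp [permKron, permBlockSum, iota, Equiv.Perm.mul_apply, Equiv.prodCongr_apply,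
    Equiv.prodCongrRight]

lemma iota_pr (z : Fin (2 * K)) :
    iota ((finProdFinEquiv.symm z).1, (finProdFinEquiv.symm z).2) = z :=
  finProdFinEquiv.apply_symm_apply z
end Blocks

section Main
variable {K : ℕ}

lemma iota_lt_iff {K : ℕ} {i j : Fin 2} {r s : Fin K} :
    iota (i, r) < iota (j, s) ↔ (i < j ∨ (i = j ∧ r < s)) := by
  have hr := r.isLt; have hs := s.isLt
  have hi : (i:ℕ) = 0 ∨ (i:ℕ) = 1 := by omega
  have hj : (j:ℕ) = 0 ∨ (j:ℕ) = 1 := by omega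
  simp only [Fin.lt_def, Fin.ext_iff, iota, finProdFinEquiv_apply_val]
  rcases hi with hi | hi <;> rcases hj with hj | hj <;> rw [hi, hj] <;> omega

lemma lis_set_nonempty {M : ℕ} (σ : Equiv.Perm (Fin M)) :
    {k | ∃ t : Finset (Fin M), t.card = k ∧ StrictMonoOn (⇑σ) ↑t}.Nonempty :=
  ⟨0, ∅, by simp, by simp [StrictMonoOn]⟩

lemma lis_set_bdd {M : ℕ} (σ : Equiv.Perm (Fin M)) :
    BddAbove {k | ∃ t : Finset (Fin M), t.card = k ∧ StrictMonoOn (⇑σ) ↑t} := by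
  refine ⟨M, fun k hk => ?_⟩
  obtain ⟨t, ht, -⟩ := hk
  simpa [ht] using t.card_le_univ

lemma le_LIS {M : ℕ} (σ : Equiv.Perm (Fin M)) (t : Finset (Fin M))
    (h : StrictMonoOn (⇑σ) ↑t) : t.card ≤ LIS σ :=
  le_csSup (lis_set_bdd σ) ⟨t, rfl, h⟩

lemma LIS_le {M : ℕ} (σ : Equiv.Perm (Fin M)) {m : ℕ}
    (h : ∀ t : Finset (Fin M), StrictMonoOn (⇑σ) ↑t → t.card ≤ m) : LIS σ ≤ m :=
  csSup_le (lis_set_nonempty σ) (by rintro k ⟨t, rfl, ht⟩; exact h t ht)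

lemma exists_LIS {M : ℕ} (σ : Equiv.Perm (Fin M)) :
    ∃ t : Finset (Fin M), t.card = LIS σ ∧ StrictMonoOn (⇑σ) ↑t :=
  Nat.sSup_mem (lis_set_nonempty σ) (lis_set_bdd σ)

/-- upper bound helper: the filtered block card is at most LIS of the block perm. -/
lemma block_filter_card_le (σ : Equiv.Perm (Fin (2 * K))) (π : Fin 2 → Equiv.Perm (Fin K))
    (g : Equiv.Perm (Fin 2)) (H : ∀ i r, σ (iota (i, r)) = iota (g i, π i r))
    (t : Finset (Fin (2 * K))) (htm : StrictMonoOn (⇑σ) ↑t) (i : Fin 2) :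
    (t.filter fun z => (finProdFinEquiv.symm z).1 = i).card ≤ LIS (π i) := by
  classical
  set u := t.filter fun z => (finProdFinEquiv.symm z).1 = i with hu
  have hinj : Set.InjOn (fun z : Fin (2*K) => (finProdFinEquiv.symm z).2) ↑u := by
    intro a ha b hb hab
    simp only [hu, Finset.coe_filter, Set.mem_setOf_eq] at ha hb
    apply finProdFinEquiv.symm.injective
    exact Prod.ext (ha.2.trans hb.2.symm) hab
  have hcard : (u.image fun z => (finProdFinEquiv.symm z).2).card = u.card :=
    Finset.card_image_of_injOn hinj
  rw [← hcard]
  apply le_LIS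
  intro r hr s hs hrs
  simp only [Finset.coe_image, Set.mem_image, Finset.mem_coe, hu, Finset.mem_filter] at hr hs
  obtain ⟨x, ⟨hxt, hxi⟩, hxr⟩ := hr
  obtain ⟨y, ⟨hyt, hyi⟩, hys⟩ := hs
  have hx2 : x = iota (i, r) := by rw [← hxr, ← hxi]; exact (iota_pr x).symm
  have hy2 : y = iota (i, s) := by rw [← hys, ← hyi]; exact (iota_pr y).symm
  have hxy : x < y := by rw [hx2, hy2]; exact iota_lt_iff.mpr (Or.inr ⟨rfl, hrs⟩)
  have hlt := htm (Finset.mem_coe.mpr hxt) (Finset.mem_coe.mpr hyt) hxy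
  rw [hx2, hy2, H, H] at hlt
  rcases iota_lt_iff.mp hlt with h | h
  · exact absurd h (lt_irrefl _)
  · exact h.2

lemma block_card_split (t : Finset (Fin (2 * K))) :
    t.card = (t.filter fun z => (finProdFinEquiv.symm z).1 = 0).card
      + (t.filter fun z => (finProdFinEquiv.symm z).1 = 1).card := by
  classical
  rw [← Finset.card_filter_add_card_filter_not
    (p := fun z => (finProdFinEquiv.symm z).1 = 0)]
  congr 1
  congr 1
  apply Finset.filter_congr
  intro z _
  simp [fin2_aux]

/-- lower bound helper for a single block mapped into a single block -/
lemma LIS_le_of_single_block (σ : Equiv.Perm (Fin (2 * K))) (τ : Equiv.Perm (Fin K))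
    (i j : Fin 2) (H : ∀ r, σ (iota (i, r)) = iota (j, τ r)) : LIS τ ≤ LIS σ := by
  obtain ⟨t, htc, htm⟩ := exists_LIS τ
  have hinj : Function.Injective (fun r : Fin K => iota (i, r)) := by
    intro a b hab
    exact congrArg Prod.snd (finProdFinEquiv.injective hab)
  rw [← htc, ← Finset.card_image_of_injective t hinj]
  apply le_LIS
  intro x hx y hy hxy
  simp only [Finset.coe_image, Set.mem_image, Finset.mem_coe] at hx hy
  obtain ⟨r, hrt, hx2⟩ := hx
  obtain ⟨s, hst, hy2⟩ := hy
  subst hx2; subst hy2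
  rw [H, H]
  rcases iota_lt_iff.mp hxy with h | ⟨-, hrs⟩
  · exact absurd h (lt_irrefl _)
  · exact iota_lt_iff.mpr (Or.inr ⟨rfl, htm hrt hst hrs⟩)

theorem LIS_block_sum (π : Fin 2 → Equiv.Perm (Fin K)) :
    LIS (permKron (1 : Equiv.Perm (Fin 2)) (1 : Equiv.Perm (Fin K)) * permBlockSum π)
      = LIS (π 0) + LIS (π 1) := by
  classical
  set σ := permKron (1 : Equiv.Perm (Fin 2)) (1 : Equiv.Perm (Fin K)) * permBlockSum π with hσ
  have H : ∀ i r, σ (iota (i, r)) = iota (i, π i r) := fun i r => by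
    rw [hσ, apply_iota]; rfl
  apply le_antisymm
  · obtain ⟨t, htc, htm⟩ := exists_LIS σ
    rw [← htc, block_card_split t]
    exact add_le_add (block_filter_card_le σ π 1 H t htm 0)
      (block_filter_card_le σ π 1 H t htm 1)
  · obtain ⟨t0, ht0c, ht0m⟩ := exists_LIS (π 0)
    obtain ⟨t1, ht1c, ht1m⟩ := exists_LIS (π 1)
    have hinj : ∀ i : Fin 2, Function.Injective (fun r : Fin K => iota (i, r)) := by
      intro i a b hab
      exact congrArg Prod.snd (finProdFinEquiv.injective hab)
    have hdisj : Disjoint (t0.image fun r => iota (0, r)) (t1.image fun r => iota (1, r)) := by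
      rw [Finset.disjoint_left]
      rintro x hx0 hx1
      simp only [Finset.mem_image] at hx0 hx1
      obtain ⟨r, -, hr⟩ := hx0
      obtain ⟨s, -, hs⟩ := hx1
      have h01 : ((0:Fin 2), r) = ((1:Fin 2), s) := finProdFinEquiv.injective (hr.trans hs.symm)
      simpa using congrArg Prod.fst h01
    have hcard : ((t0.image fun r => iota (0, r)) ∪ (t1.image fun r => iota (1, r))).card
        = t0.card + t1.card := by
      rw [Finset.card_union_of_disjoint hdisj, Finset.card_image_of_injective _ (hinj 0),
        Finset.card_image_of_injective _ (hinj 1)]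
    rw [← ht0c, ← ht1c, ← hcard]
    apply le_LIS
    intro x hx y hy hxy
    simp only [Finset.coe_union, Set.mem_union, Finset.coe_image, Set.mem_image,
      Finset.mem_coe] at hx hy
    obtain ⟨i, r, hrt, hx2⟩ : ∃ i r, ((i = 0 ∧ r ∈ t0) ∨ (i = 1 ∧ r ∈ t1)) ∧ x = iota (i, r) := by
      rcases hx with ⟨r, hr, h⟩ | ⟨r, hr, h⟩
      · exact ⟨0, r, Or.inl ⟨rfl, hr⟩, h.symm⟩
      · exact ⟨1, r, Or.inr ⟨rfl, hr⟩, h.symm⟩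
    obtain ⟨j, s, hst, hy2⟩ : ∃ j s, ((j = 0 ∧ s ∈ t0) ∨ (j = 1 ∧ s ∈ t1)) ∧ y = iota (j, s) := by
      rcases hy with ⟨s, hs, h⟩ | ⟨s, hs, h⟩
      · exact ⟨0, s, Or.inl ⟨rfl, hs⟩, h.symm⟩
      · exact ⟨1, s, Or.inr ⟨rfl, hs⟩, h.symm⟩
    subst hx2; subst hy2
    rw [H, H]
    rcases iota_lt_iff.mp hxy with h | ⟨h, hrs⟩
    · exact iota_lt_iff.mpr (Or.inl h)
    · subst h
      refine iota_lt_iff.mpr (Or.inr ⟨rfl, ?_⟩)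
      rcases hrt with ⟨hi, hr⟩ | ⟨hi, hr⟩ <;> rcases hst with ⟨hj, hs⟩ | ⟨hj, hs⟩
      · subst hi; exact ht0m hr hs hrs
      · rw [hi] at hj; exact absurd hj (by decide)
      · rw [hi] at hj; exact absurd hj (by decide)
      · subst hi; exact ht1m hr hs hrs

theorem LIS_block_max (π : Fin 2 → Equiv.Perm (Fin K)) :
    LIS (permKron (finRotate 2) (1 : Equiv.Perm (Fin K)) * permBlockSum π)
      = max (LIS (π 0)) (LIS (π 1)) := by
  classical
  set σ := permKron (finRotate 2) (1 : Equiv.Perm (Fin K)) * permBlockSum π with hσ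
  have H : ∀ i r, σ (iota (i, r)) = iota (finRotate 2 i, π i r) := fun i r => by
    rw [hσ, apply_iota]
  have H0 : ∀ r, σ (iota (0, r)) = iota (1, π 0 r) := fun r => by
    rw [H, show (finRotate 2) (0 : Fin 2) = 1 from by decide]
  have H1 : ∀ r, σ (iota (1, r)) = iota (0, π 1 r) := fun r => by
    rw [H, show (finRotate 2) (1 : Fin 2) = 0 from by decide]
  apply le_antisymm
  · obtain ⟨t, htc, htm⟩ := exists_LIS σ
    -- t lies in a single block
    have hsingle : (∀ x ∈ t, (finProdFinEquiv.symm x).1 = 0) ∨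
        (∀ x ∈ t, (finProdFinEquiv.symm x).1 = 1) := by
      by_contra hc
      push_neg at hc
      obtain ⟨⟨y, hyt, hy1⟩, ⟨x, hxt, hx0⟩⟩ := hc
      have hy1' : (finProdFinEquiv.symm y).1 = 1 := fin2_aux.mp hy1
      have hx0' : (finProdFinEquiv.symm x).1 = 0 := fin2_aux'.mp hx0
      have hx2 : x = iota (0, (finProdFinEquiv.symm x).2) := by
        conv_lhs => rw [← iota_pr x]
        rw [hx0']
      have hy2 : y = iota (1, (finProdFinEquiv.symm y).2) := by
        conv_lhs => rw [← iota_pr y]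
        rw [hy1']
      have hxy : x < y := by
        rw [hx2, hy2]; exact iota_lt_iff.mpr (Or.inl (by decide))
      have hlt := htm (Finset.mem_coe.mpr hxt) (Finset.mem_coe.mpr hyt) hxy
      rw [hx2, hy2, H0, H1] at hlt
      rcases iota_lt_iff.mp hlt with h | ⟨h, -⟩
      · exact absurd h (by decide)
      · exact absurd h (by decide)
    rw [← htc]
    rcases hsingle with hs | hs
    · refine le_max_of_le_left ?_
      have he : t = t.filter fun z => (finProdFinEquiv.symm z).1 = 0 :=
        (Finset.filter_eq_self.mpr hs).symm
      rw [he]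
      exact block_filter_card_le σ π (finRotate 2) H t htm 0
    · refine le_max_of_le_right ?_
      have he : t = t.filter fun z => (finProdFinEquiv.symm z).1 = 1 :=
        (Finset.filter_eq_self.mpr hs).symm
      rw [he]
      exact block_filter_card_le σ π (finRotate 2) H t htm 1
  · rw [max_le_iff]
    exact ⟨LIS_le_of_single_block σ (π 0) 0 1 H0, LIS_le_of_single_block σ (π 1) 1 0 H1⟩

end Main



def Params : ℕ → Type
  | 0 => Unit
  | n + 1 => Bool × Params n × Params n

instance instFintypeParams : ∀ n, Fintype (Params n)
  | 0 => inferInstanceAs (Fintype Unit)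
  | n + 1 => letI := instFintypeParams n; inferInstanceAs (Fintype (Bool × Params n × Params n))

def Lval : ∀ n, Params n → ℕ
  | 0, _ => 1
  | n + 1, (b, p, q) => if b then max (Lval n p) (Lval n q) else Lval n p + Lval n q

def bperm : ∀ n, Params n → Equiv.Perm (Fin (2 ^ n))
  | 0, _ => 1
  | n + 1, (b, p, q) =>
    (finCongr (pow_succ' 2 n).symm).permCongr
      (permKron (finRotate 2 ^ (if b then (1 : ℤ) else 0)) 1 *
        permBlockSum ![bperm n p, bperm n q])

lemma finRotate_two_zpow (a : ℤ) :
    finRotate 2 ^ a = if a % 2 = 0 then 1 else finRotate 2 := by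
  have h2 : finRotate 2 ^ (2 : ℤ) = 1 := by
    rw [show (2:ℤ) = ((2:ℕ):ℤ) from rfl, zpow_natCast]
    decide
  have key : finRotate 2 ^ a = finRotate 2 ^ (a % 2) := by
    conv_lhs => rw [← Int.emod_add_mul_ediv a 2]
    rw [zpow_add, zpow_mul, h2, one_zpow, mul_one]
  rcases Int.emod_two_eq a with h | h
  · rw [key, h, zpow_zero, if_pos rfl]
  · rw [key, h, zpow_one, if_neg (by norm_num)]

lemma pair_eta {α : Type*} (π : Fin 2 → α) : ![π 0, π 1] = π := by
  funext i
  fin_cases i <;> rfl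

lemma range_bperm : ∀ n, nonsimpleButterfly 2 n = Set.range (bperm n)
  | 0 => by
    ext σ
    simp only [nonsimpleButterfly, Set.mem_singleton_iff, Set.mem_range]
    constructor
    · rintro rfl; exact ⟨(), rfl⟩
    · rintro ⟨p, rfl⟩; rfl
  | n + 1 => by
    have IH := range_bperm n
    ext σ
    simp only [nonsimpleButterfly, Set.mem_setOf_eq, Set.mem_range]
    constructor
    · rintro ⟨a, π, hπ, rfl⟩
      have h0 : π 0 ∈ Set.range (bperm n) := IH ▸ hπ 0
      have h1 : π 1 ∈ Set.range (bperm n) := IH ▸ hπ 1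
      obtain ⟨p, hp⟩ := h0
      obtain ⟨q, hq⟩ := h1
      rcases Int.emod_two_eq a with h | h
      · refine ⟨(false, p, q), ?_⟩
        show (finCongr (pow_succ' 2 n).symm).permCongr
          (permKron (finRotate 2 ^ (if false then (1:ℤ) else 0)) 1 *
            permBlockSum ![bperm n p, bperm n q]) = _
        rw [if_neg (by simp), finRotate_two_zpow a, if_pos h, zpow_zero, hp, hq, pair_eta]
      · refine ⟨(true, p, q), ?_⟩
        show (finCongr (pow_succ' 2 n).symm).permCongr
          (permKron (finRotate 2 ^ (if true then (1:ℤ) else 0)) 1 *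
            permBlockSum ![bperm n p, bperm n q]) = _
        rw [if_pos rfl, zpow_one, finRotate_two_zpow a, if_neg (by rw [h]; norm_num),
          hp, hq, pair_eta]
    · rintro ⟨⟨b, p, q⟩, rfl⟩
      refine ⟨if b then 1 else 0, ![bperm n p, bperm n q], ?_, rfl⟩
      intro i
      rw [IH]
      fin_cases i
      · exact ⟨p, rfl⟩
      · exact ⟨q, rfl⟩

lemma LIS_one_fin_one : LIS (1 : Equiv.Perm (Fin 1)) = 1 := by
  refine le_antisymm (LIS_le _ fun t _ => by simpa using t.card_le_univ) ?_
  have := le_LIS (1 : Equiv.Perm (Fin 1)) Finset.univ (fun x _ y _ hxy => absurd hxy (by omega))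
  simpa using this

lemma LIS_permCongr_finCongr {a b : ℕ} (h : a = b) (σ : Equiv.Perm (Fin a)) :
    LIS ((finCongr h).permCongr σ) = LIS σ := by
  subst h
  have he : (finCongr rfl).permCongr σ = σ := Equiv.ext fun x => by simp
  rw [he]

lemma bperm_injective : ∀ n, Function.Injective (bperm n)
  | 0 => fun p q _ => rfl
  | n + 1 => by
    have IH := bperm_injective n
    rintro ⟨b, p, q⟩ ⟨b', p', q'⟩ h
    simp only [bperm] at h
    have h2 := (Equiv.permCongr (finCongr (pow_succ' 2 n).symm)).injective h
    have h3 : ∀ (i : Fin 2) (r : Fin (2^n)),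
        ((finRotate 2 ^ (if b then (1:ℤ) else 0)) i, (![bperm n p, bperm n q] i) r)
          = ((finRotate 2 ^ (if b' then (1:ℤ) else 0)) i, (![bperm n p', bperm n q'] i) r) := by
      intro i r
      have e : (permKron (finRotate 2 ^ (if b then (1:ℤ) else 0))
              (1 : Equiv.Perm (Fin (2^n))) *
            permBlockSum ![bperm n p, bperm n q]) (iota (i, r))
          = (permKron (finRotate 2 ^ (if b' then (1:ℤ) else 0))
              (1 : Equiv.Perm (Fin (2^n))) *
            permBlockSum ![bperm n p', bperm n q']) (iota (i, r)) := by rw [h2]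
      rw [apply_iota, apply_iota] at e
      exact finProdFinEquiv.injective e
    have hr0 : Fin (2^n) := ⟨0, Nat.two_pow_pos n⟩
    have hbb : b = b' := by
      have := congrArg Prod.fst (h3 0 hr0)
      rcases b <;> rcases b' <;> simp_all [finRotate_two_zpow]
    subst hbb
    have hp : p = p' := by
      apply IH; apply Equiv.ext; intro r
      simpa using congrArg Prod.snd (h3 0 r)
    have hq : q = q' := by
      apply IH; apply Equiv.ext; intro r
      simpa using congrArg Prod.snd (h3 1 r)
    rw [hp, hq]

lemma LIS_bperm : ∀ n (p : Params n), LIS (bperm n p) = Lval n p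
  | 0, p => LIS_one_fin_one
  | n + 1, (b, p, q) => by
    have IHp := LIS_bperm n p
    have IHq := LIS_bperm n q
    show LIS ((finCongr (pow_succ' 2 n).symm).permCongr
      (permKron (finRotate 2 ^ (if b then (1 : ℤ) else 0)) 1 *
        permBlockSum ![bperm n p, bperm n q])) = _
    rw [LIS_permCongr_finCongr]
    rcases b with _ | _
    · rw [if_neg (by simp), zpow_zero, LIS_block_sum]
      show LIS (bperm n p) + LIS (bperm n q) = Lval (n+1) (false, p, q)
      rw [IHp, IHq]
      rfl
    · rw [if_pos rfl, zpow_one, LIS_block_max]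
      show max (LIS (bperm n p)) (LIS (bperm n q)) = Lval (n+1) (true, p, q)
      rw [IHp, IHq]
      rfl

lemma card_params (n : ℕ) : Fintype.card (Params n) = 2 ^ (2 ^ n - 1) := by
  induction n with
  | zero => rfl
  | succ n ih =>
    have h1 : (1:ℕ) ≤ 2^n := Nat.one_le_two_pow
    have h2 : 2^(n+1) = 2*2^n := by ring
    rw [show Fintype.card (Params (n+1)) = Fintype.card (Bool × Params n × Params n) from rfl,
      Fintype.card_prod, Fintype.card_prod, Fintype.card_bool, ih, ← pow_add, ← pow_succ']
    congr 1
    omega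

lemma lval_pos : ∀ n (p : Params n), 1 ≤ Lval n p
  | 0, _ => le_refl 1
  | n + 1, (b, p, q) => by
    have h1 := lval_pos n p
    rcases b
    · exact le_trans h1 (Nat.le_add_right _ _)
    · exact le_trans h1 (le_max_left _ _)

lemma sum_split (n : ℕ) (F : Params (n+1) → ℝ) :
    ∑ z : Params (n+1), F z = (∑ p : Params n, ∑ q : Params n, F (false, p, q))
      + ∑ p : Params n, ∑ q : Params n, F (true, p, q) := by
  rw [show (∑ z : Params (n+1), F z) = ∑ z : Bool × Params n × Params n, F z from rfl]
  erw [Fintype.sum_prod_type, Fintype.sum_bool]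
  rw [Fintype.sum_prod_type, Fintype.sum_prod_type]
  ring

lemma max_sq_add_min_sq (a b : ℝ) : max a b ^ 2 + min a b ^ 2 = a ^ 2 + b ^ 2 := by
  rcases le_total a b with h | h <;>
    simp [max_eq_right h, min_eq_left h, max_eq_left h, min_eq_right h] <;> ring

lemma variance_step (c S Q D Mi : ℝ) (hc : 0 < c) (hS : 0 ≤ S) (hD : 0 ≤ D)
    (k1 : (c*S - D/2)^2 ≤ c^2*Mi) (k2 : c*Q ≤ 2*S^2) :
    2*c^2*((2*c*Q + 2*S^2) + (2*c*Q - Mi)) ≤ 2*(2*c*S + (c*S + D/2))^2 := by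
  nlinarith [mul_le_mul_of_nonneg_left k2 (sq_nonneg c), mul_nonneg (mul_nonneg hc.le hS) hD,
    sq_nonneg D, k1]

lemma D2_step (c S Q D : ℝ) (e6 : D^2 ≤ c^2*(2*c*Q - 2*S^2)) (ih3 : c*Q ≤ 2*S^2) :
    D^2 ≤ 2*c^2*S^2 := by
  nlinarith [mul_le_mul_of_nonneg_left ih3 (sq_nonneg c)]

lemma lower_step (c S D t : ℝ) (hD : 0 ≤ D) (h1 : t * c * c ≤ S * c) :
    t * (3/2) * (2*c^2) ≤ 2*c*S + (c*S + D/2) := by nlinarith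

set_option maxHeartbeats 1000000 in
lemma main_bounds (n : ℕ) :
    ((3:ℝ)/2)^n * (Fintype.card (Params n) : ℝ) ≤ (∑ p : Params n, (Lval n p : ℝ)) ∧
    (∑ p : Params n, (Lval n p : ℝ)) ≤ ((6 + Real.sqrt 2)/4)^n * (Fintype.card (Params n) : ℝ) ∧
    (Fintype.card (Params n) : ℝ) * (∑ p : Params n, ((Lval n p : ℝ))^2)
      ≤ 2 * (∑ p : Params n, (Lval n p : ℝ))^2 := by
  induction n with
  | zero =>
    letI : Unique (Params 0) := inferInstanceAs (Unique Unit)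
    rw [show (Fintype.card (Params 0) : ℝ) = 1 by rw [card_params]; norm_num]
    rw [Fintype.sum_unique (fun p : Params 0 => (Lval 0 p : ℝ)),
      Fintype.sum_unique (fun p : Params 0 => ((Lval 0 p : ℝ))^2)]
    show ((3:ℝ)/2)^0 * 1 ≤ ((1:ℕ):ℝ) ∧ ((1:ℕ):ℝ) ≤ _ * 1 ∧ 1 * ((1:ℕ):ℝ)^2 ≤ 2 * ((1:ℕ):ℝ)^2
    norm_num
  | succ n ih =>
    obtain ⟨ih1, ih2, ih3⟩ := ih
    have hs2 : Real.sqrt 2 ^ 2 = 2 := Real.sq_sqrt (by norm_num)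
    have hs2' : (0:ℝ) ≤ Real.sqrt 2 := Real.sqrt_nonneg 2
    set c : ℝ := (Fintype.card (Params n) : ℝ) with hc
    have hcpos : 0 < c := by
      rw [hc]
      exact_mod_cast Nat.pos_of_ne_zero (by rw [card_params]; positivity)
    set x : Params n → ℝ := fun p => (Lval n p : ℝ) with hx
    have hx1 : ∀ p, 1 ≤ x p := fun p => by simp only [hx]; exact_mod_cast lval_pos n p
    set S : ℝ := ∑ p : Params n, x p with hS
    set Q : ℝ := ∑ p : Params n, (x p)^2 with hQ
    set A : ℝ := ∑ p : Params n, ∑ q : Params n, max (x p) (x q) with hA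
    set B : ℝ := ∑ p : Params n, ∑ q : Params n, min (x p) (x q) with hB
    set Ma : ℝ := ∑ p : Params n, ∑ q : Params n, (max (x p) (x q))^2 with hMa
    set Mi : ℝ := ∑ p : Params n, ∑ q : Params n, (min (x p) (x q))^2 with hMi
    set D : ℝ := ∑ p : Params n, ∑ q : Params n, |x p - x q| with hD
    -- generic double-sum identity
    have twosum : ∀ f : Params n → ℝ,
        (∑ p : Params n, ∑ q : Params n, (f p + f q)) = 2 * c * (∑ p : Params n, f p) := by
      intro f
      simp only [Finset.sum_add_distrib, Finset.sum_const, Finset.card_univ, nsmul_eq_mul,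
        ← Finset.sum_mul, ← Finset.mul_sum]
      rw [hc]
      ring
    have hS1 : c ≤ S := by
      have := Finset.sum_le_sum (fun p (_ : p ∈ Finset.univ) => hx1 p)
      simpa [Finset.sum_const, Finset.card_univ, ← hc, ← hS] using this
    have hS0 : 0 ≤ S := le_trans hcpos.le hS1
    have hD0 : 0 ≤ D := Finset.sum_nonneg fun p _ => Finset.sum_nonneg fun q _ => abs_nonneg _
    -- identities
    have e1 : (∑ p : Params n, ∑ q : Params n, (x p + x q)) = 2 * c * S := twosum x
    have e3 : A + B = 2 * c * S := by
      rw [hA, hB, ← Finset.sum_add_distrib]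
      simp_rw [← Finset.sum_add_distrib, max_add_min]
      exact twosum x
    have e4 : A - B = D := by
      rw [hA, hB, ← Finset.sum_sub_distrib]
      simp_rw [← Finset.sum_sub_distrib, max_sub_min_eq_abs']
      exact hD.symm
    have e5 : Ma + Mi = 2 * c * Q := by
      rw [hMa, hMi, ← Finset.sum_add_distrib]
      simp_rw [← Finset.sum_add_distrib, max_sq_add_min_sq]
      exact twosum (fun p => (x p)^2)
    have e2 : (∑ p : Params n, ∑ q : Params n, (x p + x q)^2) = 2*c*Q + 2*S^2 := by
      simp only [add_sq]
      simp only [Finset.sum_add_distrib, Finset.sum_const, Finset.card_univ, nsmul_eq_mul,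
        ← Finset.sum_mul, ← Finset.mul_sum]
      rw [← hS, ← hQ, hc]
      ring
    have esub : (∑ p : Params n, ∑ q : Params n, (x p - x q)^2) = 2*c*Q - 2*S^2 := by
      simp only [sub_sq]
      simp only [Finset.sum_add_distrib, Finset.sum_sub_distrib, Finset.sum_const,
        Finset.card_univ, nsmul_eq_mul, ← Finset.sum_mul, ← Finset.mul_sum]
      rw [← hS, ← hQ, hc]
      ring
    have e6 : D^2 ≤ c^2 * (2*c*Q - 2*S^2) := by
      have hcs := sq_sum_le_card_mul_sum_sq
        (s := (Finset.univ : Finset (Params n × Params n)))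
        (f := fun z => |x z.1 - x z.2|)
      rw [Fintype.sum_prod_type (f := fun z : Params n × Params n => |x z.1 - x z.2|)] at hcs
      simp only [sq_abs] at hcs
      rw [Fintype.sum_prod_type (f := fun z : Params n × Params n => (x z.1 - x z.2)^2)] at hcs
      rw [esub, ← hD, Finset.card_univ, Fintype.card_prod] at hcs
      push_cast at hcs
      rw [← hc] at hcs
      calc D^2 ≤ (c * c : ℝ) * (2*c*Q - 2*S^2) := by exact_mod_cast hcs
        _ = c^2 * (2*c*Q - 2*S^2) := by ring
    have e7 : B^2 ≤ c^2 * Mi := by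
      have hcs := sq_sum_le_card_mul_sum_sq
        (s := (Finset.univ : Finset (Params n × Params n)))
        (f := fun z => min (x z.1) (x z.2))
      rw [Fintype.sum_prod_type (f := fun z : Params n × Params n => min (x z.1) (x z.2))] at hcs
      rw [Fintype.sum_prod_type (f := fun z : Params n × Params n => (min (x z.1) (x z.2))^2)] at hcs
      rw [← hB, ← hMi, Finset.card_univ, Fintype.card_prod] at hcs
      push_cast at hcs
      rw [← hc] at hcs
      calc B^2 ≤ (c * c : ℝ) * Mi := by exact_mod_cast hcs
        _ = c^2 * Mi := by ring
    -- split sums for n+1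
    have hsplit1 : (∑ z : Params (n+1), (Lval (n+1) z : ℝ)) = 2*c*S + A := by
      rw [sum_split n (fun z => (Lval (n+1) z : ℝ))]
      have t1 : (∑ p : Params n, ∑ q : Params n, ((Lval (n+1) (false, p, q) : ℝ)))
          = ∑ p : Params n, ∑ q : Params n, (x p + x q) := by
        apply Finset.sum_congr rfl; intro p _; apply Finset.sum_congr rfl; intro q _
        show ((Lval n p + Lval n q : ℕ) : ℝ) = x p + x q
        push_cast [hx]; ring
      have t2 : (∑ p : Params n, ∑ q : Params n, ((Lval (n+1) (true, p, q) : ℝ)))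
          = A := by
        rw [hA]
        apply Finset.sum_congr rfl; intro p _; apply Finset.sum_congr rfl; intro q _
        show ((max (Lval n p) (Lval n q) : ℕ) : ℝ) = max (x p) (x q)
        simp only [hx]; exact Nat.cast_max _ _
      rw [t1, t2, e1]
    have hsplit2 : (∑ z : Params (n+1), ((Lval (n+1) z : ℝ))^2) = (2*c*Q + 2*S^2) + Ma := by
      rw [sum_split n (fun z => ((Lval (n+1) z : ℝ))^2)]
      have t1 : (∑ p : Params n, ∑ q : Params n, ((Lval (n+1) (false, p, q) : ℝ))^2)
          = ∑ p : Params n, ∑ q : Params n, (x p + x q)^2 := by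
        apply Finset.sum_congr rfl; intro p _; apply Finset.sum_congr rfl; intro q _
        show (((Lval n p + Lval n q : ℕ) : ℝ))^2 = (x p + x q)^2
        push_cast [hx]; ring
      have t2 : (∑ p : Params n, ∑ q : Params n, ((Lval (n+1) (true, p, q) : ℝ))^2)
          = Ma := by
        rw [hMa]
        apply Finset.sum_congr rfl; intro p _; apply Finset.sum_congr rfl; intro q _
        show (((max (Lval n p) (Lval n q) : ℕ) : ℝ))^2 = (max (x p) (x q))^2
        simp only [hx]
        push_cast [Nat.cast_max]
        ring
      rw [t1, t2, e2]
    have hccard : (Fintype.card (Params (n+1)) : ℝ) = 2 * c^2 := by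
      rw [show Fintype.card (Params (n+1)) = Fintype.card (Bool × Params n × Params n) from rfl,
        Fintype.card_prod, Fintype.card_prod, Fintype.card_bool]
      push_cast [← hc]
      ring
    have hAval : A = c*S + D/2 := by linarith
    have hBval : B = c*S - D/2 := by linarith
    -- upper bound on D
    have hD2 : D^2 ≤ 2*c^2*S^2 := D2_step c S Q D e6 ih3
    have hDle : D ≤ Real.sqrt 2 * c * S := by
      have hrhs0 : 0 ≤ Real.sqrt 2 * c * S := by positivity
      have h1 : D^2 ≤ (Real.sqrt 2 * c * S)^2 := by
        have : (Real.sqrt 2 * c * S)^2 = 2*c^2*S^2 := by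
          rw [mul_pow, mul_pow, hs2]
        linarith
      calc D = Real.sqrt (D^2) := (Real.sqrt_sq hD0).symm
        _ ≤ Real.sqrt ((Real.sqrt 2 * c * S)^2) := Real.sqrt_le_sqrt h1
        _ = Real.sqrt 2 * c * S := Real.sqrt_sq hrhs0
    refine ⟨?_, ?_, ?_⟩
    · -- lower bound
      rw [hsplit1, hccard, pow_succ, hAval]
      exact lower_step c S D _ hD0 (mul_le_mul_of_nonneg_right ih1 hcpos.le)
    · -- upper bound
      rw [hsplit1, hccard, pow_succ]
      have h1 : c * S ≤ c * (((6 + Real.sqrt 2)/4)^n * c) :=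
        mul_le_mul_of_nonneg_left ih2 hcpos.le
      calc 2*c*S + A = 3*(c*S) + D/2 := by rw [hAval]; ring
        _ ≤ 3*(c*S) + (Real.sqrt 2 * c * S)/2 := by linarith [hDle]
        _ = (3 + Real.sqrt 2/2) * (c*S) := by ring
        _ ≤ (3 + Real.sqrt 2/2) * (c*(((6 + Real.sqrt 2)/4)^n * c)) := by
            apply mul_le_mul_of_nonneg_left h1 (by positivity)
        _ = ((6 + Real.sqrt 2)/4)^n * ((6 + Real.sqrt 2)/4) * (2*c^2) := by ring
    · -- variance invariant
      rw [hsplit1, hsplit2, hccard]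
      have hMieq : Ma = 2*c*Q - Mi := by linarith
      rw [hMieq, hAval]
      have k1 : (c*S - D/2)^2 ≤ c^2*Mi := by rw [← hBval]; exact e7
      exact variance_step c S Q D Mi hcpos hS0 hD0 k1 ih3

lemma finsum_butterfly (n : ℕ) :
    ∑ᶠ σ ∈ nonsimpleButterfly 2 n, (LIS σ : ℝ) = ∑ p : Params n, (Lval n p : ℝ) := by
  rw [range_bperm, finsum_mem_range (bperm_injective n), finsum_eq_sum_of_fintype]
  exact Finset.sum_congr rfl fun p _ => by simp only [Function.comp_apply, LIS_bperm]

lemma two_pow_card (n : ℕ) : ((2:ℝ)) ^ (2 ^ n - 1) = (Fintype.card (Params n) : ℝ) := by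
  rw [card_params]
  push_cast
  rfl

/-- Power-law bounds on the average LIS over the nonsimple binary butterfly group
`B_{2^n}` (of cardinality `2^{2ⁿ−1}`):
`(3/2)ⁿ ≤ E L(σ) ≤ ((6+√2)/4)ⁿ`, i.e. `N^{log₂(3/2)} ≤ E L(σ) ≤ N^{log₂(6+√2)−2}`. -/
theorem nonsimpleButterfly_expected_LIS_bounds (n : ℕ) :
    ((3 : ℝ) / 2) ^ n ≤
        (1 / (2 : ℝ) ^ (2 ^ n - 1)) * ∑ᶠ σ ∈ nonsimpleButterfly 2 n, (LIS σ : ℝ) ∧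
      (1 / (2 : ℝ) ^ (2 ^ n - 1)) * ∑ᶠ σ ∈ nonsimpleButterfly 2 n, (LIS σ : ℝ) ≤
        ((6 + Real.sqrt 2) / 4) ^ n := by
  have hC : (0:ℝ) < (2:ℝ) ^ (2 ^ n - 1) := by positivity
  have hfin := finsum_butterfly n
  obtain ⟨h1, h2, -⟩ := main_bounds n
  rw [← two_pow_card] at h1 h2
  constructor
  · rw [hfin, one_div, mul_comm, ← div_eq_mul_inv, le_div_iff₀ hC]
    exact h1
  · rw [hfin, one_div, mul_comm, ← div_eq_mul_inv, div_le_iff₀ hC]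
    exact h2
end

section
/- For n ≥ 0 and k ≥ 1 let s_B(n,k) denote the number of permutations σ in the nonsimple binary butterfly group B_{2^n} with C(σ) = k. Then for all n ≥ 0 and all k ≥ 1: s_B(n+1, k) = 2^{2^n − 1} · s_B(n,k) + Σ_{j=1}^{k−1} s_B(n,j) · s_B(n, k−j). -/
/-- `s_B(n,k)`: the number of nonsimple binary butterfly permutations `σ ∈ B_{2^n}`
with `C(σ) = k` (the "butterfly Stirling numbers of the first kind"). -/
noncomputable def sBCount (n k : ℕ) : ℕ :=
  {σ | σ ∈ nonsimpleButterfly 2 n ∧ numCycles σ = k}.ncard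

/-! ### Auxiliary machinery -/

section Aux

open Equiv Equiv.Perm

variable {α β γ : Type*}

/-- `SameCycle` as a setoid. -/
def scSetoid (σ : Perm α) : Setoid α :=
  ⟨σ.SameCycle, ⟨fun _ => SameCycle.refl σ _, fun h => h.symm, fun h h' => h.trans h'⟩⟩

/-- The number of orbits (cycles, counting fixed points) of a permutation. -/
noncomputable def nOrbits (σ : Perm α) : ℕ := Nat.card (Quotient (scSetoid σ))

lemma quotInv {σ : Perm α} {φ : α → γ} (h : ∀ x, φ (σ x) = φ x) :
    ∀ {x y}, σ.SameCycle x y → φ x = φ y := by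
  have hn : ∀ (f : Perm α), (∀ x, φ (f x) = φ x) → ∀ (n : ℕ) (x), φ ((f ^ n) x) = φ x := by
    intro f hf n
    induction n with
    | zero => simp
    | succ m ih => intro x; rw [pow_succ, Perm.mul_apply, ih, hf]
  have hinv : ∀ x, φ (σ⁻¹ x) = φ x := by
    intro x; conv_rhs => rw [← (show σ (σ⁻¹ x) = x from σ.apply_symm_apply x)]
    rw [h]
  rintro x y ⟨z, rfl⟩
  cases z with
  | ofNat n => rw [Int.ofNat_eq_coe, zpow_natCast]; exact (hn σ h n x).symm
  | negSucc m => rw [zpow_negSucc, ← inv_pow]; exact (hn σ⁻¹ hinv (m + 1) x).symm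

lemma nOrbits_congr {σ : Perm α} {τ : Perm β} (f : α → β) (g : β → α)
    (hf : ∀ x, τ.SameCycle (f (σ x)) (f x))
    (hg : ∀ y, σ.SameCycle (g (τ y)) (g y))
    (hgf : ∀ x, σ.SameCycle (g (f x)) x)
    (hfg : ∀ y, τ.SameCycle (f (g y)) y) :
    nOrbits σ = nOrbits τ := by
  have hF : ∀ x y, σ.SameCycle x y →
      (⟦f x⟧ : Quotient (scSetoid τ)) = ⟦f y⟧ := fun x y h =>
    quotInv (φ := fun x => (⟦f x⟧ : Quotient (scSetoid τ)))
      (fun x => Quotient.sound (hf x)) h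
  have hG : ∀ x y, τ.SameCycle x y →
      (⟦g x⟧ : Quotient (scSetoid σ)) = ⟦g y⟧ := fun x y h =>
    quotInv (φ := fun y => (⟦g y⟧ : Quotient (scSetoid σ)))
      (fun y => Quotient.sound (hg y)) h
  refine Nat.card_congr ⟨Quotient.lift (fun x => ⟦f x⟧) hF,
    Quotient.lift (fun y => ⟦g y⟧) hG, ?_, ?_⟩
  · intro u
    induction u using Quotient.inductionOn with | h x =>
    exact Quotient.sound (hgf x)
  · intro v
    induction v using Quotient.inductionOn with | h y =>
    exact Quotient.sound (hfg y)

lemma nOrbits_permCongr (e : α ≃ β) (σ : Perm α) :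
    nOrbits (e.permCongr σ) = nOrbits σ := by
  refine nOrbits_congr e.symm e ?_ ?_ ?_ ?_
  · intro x; exact SameCycle.symm ⟨1, by simp⟩
  · intro y; exact SameCycle.symm ⟨1, by simp⟩
  · intro x; simp only [Equiv.apply_symm_apply]; exact SameCycle.refl _ _
  · intro y; simp only [Equiv.symm_apply_apply]; exact SameCycle.refl _ _

lemma card_quot_eq [Fintype α] [DecidableEq α] (σ : Perm α) :
    Nat.card (Quotient (scSetoid σ)) =
      Multiset.card σ.cycleType + (Finset.univ.filter fun x => σ x = x).card := by
  classical
  have hfix : ∀ {x y : α}, σ.SameCycle x y → σ x = x → y = x := by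
    rintro x y ⟨z, rfl⟩ hx
    exact zpow_apply_eq_self_of_apply_eq_self hx z
  set f : α → ({c // c ∈ σ.cycleFactorsFinset} ⊕ {x : α // σ x = x}) := fun x =>
    if h : σ x = x then .inr ⟨x, h⟩ else
      .inl ⟨σ.cycleOf x, cycleOf_mem_cycleFactorsFinset_iff.2 (mem_support.2 h)⟩ with hf
  have hwd : ∀ x y, σ.SameCycle x y → f x = f y := by
    intro x y hxy
    by_cases hx : σ x = x
    · obtain rfl := hfix hxy hx; rfl
    · have hy : ¬ σ y = y := by
        intro hy
        obtain rfl := hfix hxy.symm hy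
        exact hx hy
      simp only [hf, dif_neg hx, dif_neg hy]
      exact congrArg _ (Subtype.ext hxy.cycleOf_eq)
  set F : Quotient (scSetoid σ) → _ := Quotient.lift f (fun a b h => hwd a b h) with hF
  have hbij : Function.Bijective F := by
    constructor
    · intro u v
      induction u using Quotient.inductionOn with | h x =>
      induction v using Quotient.inductionOn with | h y =>
      intro huv
      apply Quotient.sound
      show σ.SameCycle x y
      have huv' : f x = f y := huv
      by_cases hx : σ x = x <;> by_cases hy : σ y = y
      · rw [hf] at huv'
        simp only [dif_pos hx, dif_pos hy, Sum.inr.injEq, Subtype.mk.injEq] at huv'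
        exact huv' ▸ SameCycle.refl σ x
      · rw [hf] at huv'; simp only [dif_pos hx, dif_neg hy] at huv'
        exact absurd huv' (by simp)
      · rw [hf] at huv'; simp only [dif_neg hx, dif_pos hy] at huv'
        exact absurd huv' (by simp)
      · rw [hf] at huv'
        simp only [dif_neg hx, dif_neg hy, Sum.inl.injEq, Subtype.mk.injEq] at huv'
        have hy' : y ∈ (σ.cycleOf x).support := by
          rw [huv']
          exact mem_support_cycleOf_iff.2 ⟨SameCycle.refl σ y, mem_support.2 hy⟩
        exact (mem_support_cycleOf_iff.1 hy').1
    · rintro (⟨c, hc⟩ | ⟨x, hx⟩)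
      · have hcyc : c.IsCycle := (mem_cycleFactorsFinset_iff.1 hc).1
        obtain ⟨x, hx⟩ := hcyc.nonempty_support
        have hxs : x ∈ σ.support := mem_cycleFactorsFinset_support_le hc hx
        refine ⟨⟦x⟧, ?_⟩
        have hxx : ¬ σ x = x := mem_support.1 hxs
        show f x = _
        rw [hf]
        simp only [dif_neg hxx]
        exact congrArg _ (Subtype.ext (cycle_is_cycleOf hx hc).symm)
      · refine ⟨⟦x⟧, ?_⟩
        show f x = _
        rw [hf]; simp [dif_pos hx]
  rw [Nat.card_eq_of_bijective F hbij, Nat.card_sum]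
  congr 1
  · rw [Nat.card_eq_fintype_card, Fintype.card_coe, cycleType_def]
    simp
  · rw [Nat.card_eq_fintype_card, Fintype.card_subtype]

lemma numCycles_eq_nOrbits {M : ℕ} (σ : Perm (Fin M)) : numCycles σ = nOrbits σ :=
  (card_quot_eq σ).symm

lemma one_le_numCycles {n : ℕ} (σ : Perm (Fin (2 ^ n))) : 1 ≤ numCycles σ := by
  rw [numCycles_eq_nOrbits, nOrbits]
  have h : Nonempty (Quotient (scSetoid σ)) :=
    ⟨⟦⟨0, pow_pos (by norm_num) n⟩⟧⟩
  exact Nat.card_pos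

/-- pair-level butterfly permutation -/
def WP (c : Perm (Fin 2)) (π : Fin 2 → Perm β) : Perm (Fin 2 × β) :=
  (Equiv.prodCongrRight π).trans (Equiv.prodCongr c (Equiv.refl β))

@[simp] lemma WP_apply (c : Perm (Fin 2)) (π : Fin 2 → Perm β) (p : Fin 2 × β) :
    WP c π p = (c p.1, π p.1 p.2) := rfl

lemma WP_one (π : Fin 2 → Perm β) : WP 1 π = Equiv.prodCongrRight π := by
  ext p <;> rfl

lemma WP_mul (c c' : Perm (Fin 2)) (π π' : Fin 2 → Perm β) :
    WP c π * WP c' π' = WP (c * c') (fun i => π (c' i) * π' i) := by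
  ext p <;> rfl

lemma WP_one_one : WP (1 : Perm (Fin 2)) (fun _ => (1 : Perm β)) = 1 := by
  ext p <;> rfl

lemma WP_inv (c : Perm (Fin 2)) (π : Fin 2 → Perm β) :
    (WP c π)⁻¹ = WP c⁻¹ (fun i => (π (c⁻¹ i))⁻¹) := by
  refine inv_eq_of_mul_eq_one_right ?_
  rw [WP_mul, mul_inv_cancel]
  have : (fun i => π (c⁻¹ i) * (π (c⁻¹ i))⁻¹) = fun _ : Fin 2 => (1 : Perm β) := by
    funext i; exact mul_inv_cancel _
  rw [this, WP_one_one]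

lemma nOrbits_WP_one [Finite β] (π : Fin 2 → Perm β) :
    nOrbits (WP 1 π) = nOrbits (π 0) + nOrbits (π 1) := by
  have key : Nat.card (Quotient (scSetoid (WP 1 π))) =
      Nat.card ((Quotient (scSetoid (π 0))) ⊕ (Quotient (scSetoid (π 1)))) := by
    have hF : ∀ x y, (WP 1 π).SameCycle x y →
        (if x.1 = 0 then (Sum.inl ⟦x.2⟧ : Quotient (scSetoid (π 0)) ⊕ Quotient (scSetoid (π 1)))
         else Sum.inr ⟦x.2⟧) =
        (if y.1 = 0 then Sum.inl ⟦y.2⟧ else Sum.inr ⟦y.2⟧) := by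
      refine fun x y h => quotInv (φ := fun x : Fin 2 × β => if x.1 = 0
        then (Sum.inl ⟦x.2⟧ : Quotient (scSetoid (π 0)) ⊕ Quotient (scSetoid (π 1)))
        else Sum.inr ⟦x.2⟧) ?_ h
      rintro ⟨i, r⟩
      fin_cases i <;> simp only [WP_apply, Perm.one_apply] <;> norm_num
      · exact Quotient.sound (SameCycle.symm ⟨1, by simp⟩)
      · exact Quotient.sound (SameCycle.symm ⟨1, by simp⟩)
    have hG0 : ∀ x y, (π 0).SameCycle x y →
        (⟦((0 : Fin 2), x)⟧ : Quotient (scSetoid (WP 1 π))) = ⟦((0 : Fin 2), y)⟧ := by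
      refine fun x y h => quotInv
        (φ := fun r : β => (⟦((0 : Fin 2), r)⟧ : Quotient (scSetoid (WP 1 π)))) ?_ h
      intro r
      refine Quotient.sound (SameCycle.symm ⟨1, ?_⟩)
      simp
    have hG1 : ∀ x y, (π 1).SameCycle x y →
        (⟦((1 : Fin 2), x)⟧ : Quotient (scSetoid (WP 1 π))) = ⟦((1 : Fin 2), y)⟧ := by
      refine fun x y h => quotInv
        (φ := fun r : β => (⟦((1 : Fin 2), r)⟧ : Quotient (scSetoid (WP 1 π)))) ?_ h
      intro r
      refine Quotient.sound (SameCycle.symm ⟨1, ?_⟩)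
      simp
    refine Nat.card_congr ⟨Quotient.lift (fun x => if x.1 = 0 then Sum.inl ⟦x.2⟧
        else Sum.inr ⟦x.2⟧) hF,
      Sum.elim (Quotient.lift (fun r => ⟦((0 : Fin 2), r)⟧) hG0)
        (Quotient.lift (fun r => ⟦((1 : Fin 2), r)⟧) hG1), ?_, ?_⟩
    · intro u
      induction u using Quotient.inductionOn with | h x =>
      obtain ⟨i, r⟩ := x
      fin_cases i
      · rfl
      · rfl
    · rintro (v | v) <;>
      · induction v using Quotient.inductionOn with | h r =>
        rfl
  rw [nOrbits, key, Nat.card_sum]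
  rfl

lemma nOrbits_WP_rot (π : Fin 2 → Perm β) :
    nOrbits (WP (finRotate 2) π) = nOrbits (π 1 * π 0) := by
  have h0 : finRotate 2 (0 : Fin 2) = 1 := by decide
  have h1 : finRotate 2 (1 : Fin 2) = 0 := by decide
  refine nOrbits_congr (fun p => if p.1 = 0 then p.2 else π 1 p.2) (fun r => ((0 : Fin 2), r))
    ?_ ?_ ?_ ?_
  · rintro ⟨i, r⟩
    fin_cases i <;> simp only [WP_apply] <;> norm_num
    · exact SameCycle.symm ⟨1, by simp⟩
    · exact SameCycle.refl _ _
  · intro r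
    refine SameCycle.symm ⟨2, ?_⟩
    show (WP (finRotate 2) π) ((WP (finRotate 2) π) (0, r)) = _
    simp [h0, h1]
  · rintro ⟨i, r⟩
    fin_cases i <;> norm_num
    · exact SameCycle.refl _ _
    · refine SameCycle.symm ⟨1, ?_⟩
      simp [h1]
  · intro r; simp only [if_pos rfl]; exact SameCycle.refl _ _

/-! ### The structure of `B_{n+1}` -/

/-- The identification `Fin 2 × Fin (2^n) ≃ Fin (2^(n+1))`. -/
def EE (n : ℕ) : Fin 2 × Fin (2 ^ n) ≃ Fin (2 ^ (n + 1)) :=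
  finProdFinEquiv.trans (finCongr (pow_succ' 2 n).symm)

lemma key (n : ℕ) (c : Perm (Fin 2)) (π : Fin 2 → Perm (Fin (2 ^ n))) :
    (finCongr (pow_succ' 2 n).symm).permCongr (permKron c 1 * permBlockSum π) =
      (EE n).permCongr (WP c π) := by
  ext x
  simp [permKron, permBlockSum, WP, EE, Perm.mul_apply, Equiv.permCongr_apply,
    Equiv.trans_apply]

lemma rot_zpow (a : ℤ) : (finRotate 2) ^ a = if Even a then 1 else finRotate 2 := by
  have h2 : (finRotate 2) ^ (2 : ℤ) = 1 := by decide
  rcases Int.even_or_odd a with ⟨k, hk⟩ | ⟨k, hk⟩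
  · rw [if_pos ⟨k, hk⟩, hk, ← two_mul, zpow_mul, h2, one_zpow]
  · rw [if_neg (by simpa using (Int.not_even_iff_odd).2 ⟨k, hk⟩), hk, zpow_add, zpow_mul, h2,
      one_zpow, zpow_one, one_mul]

/-- The swap-or-identity permutation indexed by a Bool. -/
def cOf (b : Bool) : Perm (Fin 2) := if b then finRotate 2 else 1

/-- The parametrization of `B_{n+1}` by a Bool and a pair of permutations. -/
def Theta (n : ℕ) (q : Bool × (Fin 2 → Perm (Fin (2 ^ n)))) : Perm (Fin (2 ^ (n + 1))) :=
  (EE n).permCongr (WP (cOf q.1) q.2)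

lemma mem_succ_iff {n : ℕ} {σ : Perm (Fin (2 ^ (n + 1)))} :
    σ ∈ nonsimpleButterfly 2 (n + 1) ↔
      ∃ q : Bool × (Fin 2 → Perm (Fin (2 ^ n))),
        (∀ i, q.2 i ∈ nonsimpleButterfly 2 n) ∧ σ = Theta n q := by
  have hdef : σ ∈ nonsimpleButterfly 2 (n + 1) ↔
      ∃ (a : ℤ) (π : Fin 2 → Perm (Fin (2 ^ n))),
        (∀ i, π i ∈ nonsimpleButterfly 2 n) ∧
        σ = (finCongr (pow_succ' 2 n).symm).permCongr
          (permKron (finRotate 2 ^ a) 1 * permBlockSum π) := Iff.rfl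
  rw [hdef]
  constructor
  · rintro ⟨a, π, hπ, rfl⟩
    by_cases he : Even a
    · exact ⟨(false, π), hπ, by rw [key, rot_zpow, if_pos he]; rfl⟩
    · exact ⟨(true, π), hπ, by rw [key, rot_zpow, if_neg he]; rfl⟩
  · rintro ⟨⟨b, π⟩, hπ, rfl⟩
    cases b
    · exact ⟨0, π, hπ, by rw [key, zpow_zero]; rfl⟩
    · exact ⟨1, π, hπ, by rw [key, zpow_one]; rfl⟩

lemma Theta_inj (n : ℕ) : Function.Injective (Theta n) := by
  rintro ⟨b, π⟩ ⟨b', π'⟩ h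
  have h1 : WP (cOf b) π = WP (cOf b') π' := (Equiv.permCongr (EE n)).injective h
  have happ : ∀ p : Fin 2 × Fin (2 ^ n),
      ((cOf b) p.1, π p.1 p.2) = ((cOf b') p.1, π' p.1 p.2) := by
    intro p
    have := Equiv.ext_iff.1 h1 p
    simpa using this
  have r0 : Fin (2 ^ n) := ⟨0, pow_pos (by norm_num) n⟩
  have hb : b = b' := by
    have h2 := congrArg Prod.fst (happ (0, r0))
    cases b <;> cases b' <;> simp only [cOf] at h2 <;> first
      | rfl
      | exact absurd h2 (by decide)
  subst hb
  have hπ : π = π' := by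
    funext i
    exact Equiv.ext fun r => congrArg Prod.snd (happ (i, r))
  rw [hπ]

lemma permCongr_mul (e : α ≃ β) (f g : Perm α) :
    e.permCongr (f * g) = e.permCongr f * e.permCongr g := by
  ext x; simp [Perm.mul_apply]

lemma permCongr_one (e : α ≃ β) : e.permCongr (1 : Perm α) = 1 := by
  ext x; simp

lemma permCongr_inv (e : α ≃ β) (f : Perm α) :
    e.permCongr f⁻¹ = (e.permCongr f)⁻¹ := by
  refine (inv_eq_of_mul_eq_one_right ?_).symm
  rw [← _root_.permCongr_mul, mul_inv_cancel, permCongr_one]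

lemma cOf_mul (b b' : Bool) : cOf b * cOf b' = cOf (xor b b') := by
  cases b <;> cases b' <;> simp [cOf] <;> decide

lemma cOf_inv (b : Bool) : (cOf b)⁻¹ = cOf b := by
  cases b <;> simp [cOf] <;> decide

lemma B_one_mem : ∀ n, (1 : Perm (Fin (2 ^ n))) ∈ nonsimpleButterfly 2 n
  | 0 => rfl
  | n + 1 => mem_succ_iff.2 ⟨(false, fun _ => 1), fun _ => B_one_mem n, by
      show (1 : Perm (Fin (2 ^ (n + 1)))) = (EE n).permCongr (WP (cOf false) fun _ => 1)
      rw [show cOf false = 1 from rfl, WP_one_one, permCongr_one]⟩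

lemma B_mul_mem : ∀ n (σ τ : Perm (Fin (2 ^ n))), σ ∈ nonsimpleButterfly 2 n →
    τ ∈ nonsimpleButterfly 2 n → σ * τ ∈ nonsimpleButterfly 2 n := by
  intro n
  induction n with
  | zero =>
      intro σ τ hσ hτ
      obtain rfl := Set.mem_singleton_iff.1 hσ
      obtain rfl := Set.mem_singleton_iff.1 hτ
      rw [mul_one]
      exact B_one_mem 0
  | succ m ih =>
      intro σ τ hσ hτ
      obtain ⟨⟨b, π⟩, hπ, rfl⟩ := mem_succ_iff.1 hσ
      obtain ⟨⟨b', π'⟩, hπ', rfl⟩ := mem_succ_iff.1 hτ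
      refine mem_succ_iff.2 ⟨(xor b b', fun i => π ((cOf b') i) * π' i),
        fun i => ih _ _ (hπ _) (hπ' _), ?_⟩
      show _ = (EE m).permCongr (WP (cOf (xor b b')) _)
      rw [Theta, Theta, ← _root_.permCongr_mul, WP_mul, cOf_mul]

lemma B_inv_mem : ∀ n (σ : Perm (Fin (2 ^ n))), σ ∈ nonsimpleButterfly 2 n →
    σ⁻¹ ∈ nonsimpleButterfly 2 n := by
  intro n
  induction n with
  | zero =>
      intro σ hσ
      obtain rfl := Set.mem_singleton_iff.1 hσ
      rw [inv_one]
      exact B_one_mem 0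
  | succ m ih =>
      intro σ hσ
      obtain ⟨⟨b, π⟩, hπ, rfl⟩ := mem_succ_iff.1 hσ
      refine mem_succ_iff.2 ⟨(b, fun i => (π ((cOf b) i))⁻¹), fun i => ih _ (hπ _), ?_⟩
      show _ = (EE m).permCongr (WP (cOf b) fun i => (π ((cOf b) i))⁻¹)
      rw [Theta, ← permCongr_inv, WP_inv, cOf_inv]

/-! ### Counting -/

lemma ncard_pi_fin_two (s : Fin 2 → Set γ) :
    {π : Fin 2 → γ | ∀ i, π i ∈ s i}.ncard = (s 0).ncard * (s 1).ncard := by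
  rw [← Nat.card_coe_set_eq, ← Nat.card_coe_set_eq, ← Nat.card_coe_set_eq,
    ← Nat.card_prod]
  refine Nat.card_congr ?_
  refine ⟨fun f => (⟨f.1 0, f.2 0⟩, ⟨f.1 1, f.2 1⟩),
    fun p => ⟨fun i => if i = 0 then p.1.1 else p.2.1, ?_⟩, ?_, ?_⟩
  · intro i
    fin_cases i
    · simpa using p.1.2
    · simpa using p.2.2
  · rintro ⟨f, hf⟩
    refine Subtype.ext (funext fun i => ?_)
    fin_cases i <;> simp
  · rintro ⟨⟨x, hx⟩, ⟨y, hy⟩⟩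
    simp

lemma ncard_split (n : ℕ) (P : Perm (Fin (2 ^ (n + 1))) → Prop) :
    {σ | σ ∈ nonsimpleButterfly 2 (n + 1) ∧ P σ}.ncard =
      {π : Fin 2 → Perm (Fin (2 ^ n)) | (∀ i, π i ∈ nonsimpleButterfly 2 n) ∧
        P (Theta n (false, π))}.ncard +
      {π : Fin 2 → Perm (Fin (2 ^ n)) | (∀ i, π i ∈ nonsimpleButterfly 2 n) ∧
        P (Theta n (true, π))}.ncard := by
  have himg : {σ | σ ∈ nonsimpleButterfly 2 (n + 1) ∧ P σ} =
      Theta n '' {q | (∀ i, q.2 i ∈ nonsimpleButterfly 2 n) ∧ P (Theta n q)} := by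
    ext σ
    simp only [Set.mem_image, Set.mem_setOf_eq]
    constructor
    · rintro ⟨hσ, hP⟩
      obtain ⟨q, hq, rfl⟩ := mem_succ_iff.1 hσ
      exact ⟨q, ⟨hq, hP⟩, rfl⟩
    · rintro ⟨q, ⟨hq, hP⟩, rfl⟩
      exact ⟨mem_succ_iff.2 ⟨q, hq, rfl⟩, hP⟩
  rw [himg, Set.ncard_image_of_injective _ (Theta_inj n)]
  have hsplit : {q : Bool × (Fin 2 → Perm (Fin (2 ^ n))) |
        (∀ i, q.2 i ∈ nonsimpleButterfly 2 n) ∧ P (Theta n q)} =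
      ((fun π => ((false : Bool), π)) ''
        {π | (∀ i, π i ∈ nonsimpleButterfly 2 n) ∧ P (Theta n (false, π))}) ∪
      ((fun π => ((true : Bool), π)) ''
        {π | (∀ i, π i ∈ nonsimpleButterfly 2 n) ∧ P (Theta n (true, π))}) := by
    ext ⟨b, π⟩
    cases b <;> simp
  rw [hsplit, Set.ncard_union_eq, Set.ncard_image_of_injective, Set.ncard_image_of_injective]
  · intro a b hab; simpa using hab
  · intro a b hab; simpa using hab
  · rw [Set.disjoint_left]
    rintro x ⟨π, _, rfl⟩ ⟨π', _, h⟩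
    simp at h

lemma ncard_B : ∀ n, (nonsimpleButterfly 2 n).ncard = 2 ^ (2 ^ n - 1)
  | 0 => by
      simp [nonsimpleButterfly]
  | n + 1 => by
      have h := ncard_split n (fun _ => True)
      have e0 : {σ | σ ∈ nonsimpleButterfly 2 (n + 1) ∧ True} =
          nonsimpleButterfly 2 (n + 1) := by ext; simp
      have e1 : {π : Fin 2 → Perm (Fin (2 ^ n)) |
          (∀ i, π i ∈ nonsimpleButterfly 2 n) ∧ True} =
          {π : Fin 2 → Perm (Fin (2 ^ n)) | ∀ i,
            π i ∈ (fun _ : Fin 2 => nonsimpleButterfly 2 n) i} := by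
        ext; simp
      rw [e0, e1] at h
      rw [h, ncard_pi_fin_two (fun _ => nonsimpleButterfly 2 n), ncard_B n]
      have h1 : 1 ≤ 2 ^ n := Nat.one_le_two_pow
      have h2 : 2 ^ (n + 1) = 2 * 2 ^ n := by rw [pow_succ]; ring
      have h3 : 2 ^ (2 ^ n - 1) * 2 ^ (2 ^ n - 1) + 2 ^ (2 ^ n - 1) * 2 ^ (2 ^ n - 1) =
          2 ^ ((2 ^ n - 1) + (2 ^ n - 1) + 1) := by
        rw [← pow_add, ← two_mul, ← pow_succ']
      rw [h3]
      congr 1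
      clear h e0 e1 h3
      omega

lemma numCycles_Theta_false {n : ℕ} (π : Fin 2 → Perm (Fin (2 ^ n))) :
    numCycles (Theta n (false, π)) = numCycles (π 0) + numCycles (π 1) := by
  rw [numCycles_eq_nOrbits, Theta, nOrbits_permCongr]
  show nOrbits (WP (cOf false) π) = _
  rw [show cOf false = 1 from rfl, nOrbits_WP_one, ← numCycles_eq_nOrbits,
    ← numCycles_eq_nOrbits]

lemma numCycles_Theta_true {n : ℕ} (π : Fin 2 → Perm (Fin (2 ^ n))) :
    numCycles (Theta n (true, π)) = numCycles (π 1 * π 0) := by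
  rw [numCycles_eq_nOrbits, Theta, nOrbits_permCongr]
  show nOrbits (WP (cOf true) π) = _
  rw [show cOf true = finRotate 2 from rfl, nOrbits_WP_rot, ← numCycles_eq_nOrbits]

lemma ncard_biUnion [Finite γ] (s : Finset ℕ) (f : ℕ → Set γ)
    (hd : ∀ i ∈ s, ∀ j ∈ s, i ≠ j → Disjoint (f i) (f j)) :
    (⋃ i ∈ s, f i).ncard = ∑ i ∈ s, (f i).ncard := by
  classical
  induction s using Finset.induction_on with
  | empty => simp
  | @insert a s ha ih =>
      rw [Finset.sum_insert ha, Finset.set_biUnion_insert,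
        Set.ncard_union_eq ?_ (Set.toFinite _) (Set.toFinite _),
        ih (fun i hi j hj hij => hd i (Finset.mem_insert_of_mem hi) j
          (Finset.mem_insert_of_mem hj) hij)]
      refine Set.disjoint_left.2 ?_
      intro x hx hx'
      obtain ⟨i, hi, hxi⟩ := Set.mem_iUnion₂.1 hx'
      exact Set.disjoint_left.1
        (hd a (Finset.mem_insert_self a s) i (Finset.mem_insert_of_mem hi)
          (fun hai => ha (hai ▸ hi))) hx hxi

end Aux

/-- The recursion `s_B(n+1,k) = 2^{2ⁿ−1}·s_B(n,k) + Σ_{j=1}^{k−1} s_B(n,j)·s_B(n,k−j)`. -/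
theorem sBCount_recursion (n k : ℕ) (hk : 1 ≤ k) :
    sBCount (n + 1) k =
      2 ^ (2 ^ n - 1) * sBCount n k +
        ∑ j ∈ Finset.Ico 1 k, sBCount n j * sBCount n (k - j) := by
  classical
  open Equiv Equiv.Perm in
  have hmain := ncard_split n (fun σ => numCycles σ = k)
  have hfalse : {π : Fin 2 → Perm (Fin (2 ^ n)) | (∀ i, π i ∈ nonsimpleButterfly 2 n) ∧
      numCycles (Theta n (false, π)) = k}.ncard =
      ∑ j ∈ Finset.Ico 1 k, sBCount n j * sBCount n (k - j) := by
    have hU : {π : Fin 2 → Perm (Fin (2 ^ n)) | (∀ i, π i ∈ nonsimpleButterfly 2 n) ∧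
        numCycles (Theta n (false, π)) = k} =
        ⋃ j ∈ Finset.Ico 1 k, {π : Fin 2 → Perm (Fin (2 ^ n)) | ∀ i,
          π i ∈ (fun i : Fin 2 => if i = 0
            then {σ | σ ∈ nonsimpleButterfly 2 n ∧ numCycles σ = j}
            else {σ | σ ∈ nonsimpleButterfly 2 n ∧ numCycles σ = k - j}) i} := by
      ext π
      simp only [Set.mem_setOf_eq, Set.mem_iUnion, Finset.mem_Ico, Fin.forall_fin_two,
        numCycles_Theta_false, exists_prop]
      norm_num
      constructor
      · rintro ⟨⟨h0, h1⟩, hsum⟩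
        have hc0 := one_le_numCycles (π 0)
        have hc1 := one_le_numCycles (π 1)
        exact ⟨numCycles (π 0), ⟨hc0, by clear hmain; omega⟩, ⟨h0, rfl⟩,
          ⟨h1, by clear hmain; omega⟩⟩
      · rintro ⟨j, ⟨hj1, hjk⟩, ⟨h0, hc0⟩, ⟨h1, hc1⟩⟩
        exact ⟨⟨h0, h1⟩, by clear hmain; omega⟩
    rw [hU, ncard_biUnion]
    · refine Finset.sum_congr rfl fun j hj => ?_
      rw [ncard_pi_fin_two]
      norm_num
      rfl
    · intro i hi j hj hij
      refine Set.disjoint_left.2 ?_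
      intro π hπi hπj
      simp only [Set.mem_setOf_eq, Fin.forall_fin_two] at hπi hπj
      norm_num at hπi hπj
      exact hij (hπi.1.2 ▸ hπj.1.2 ▸ rfl)
  have htrue : {π : Fin 2 → Perm (Fin (2 ^ n)) | (∀ i, π i ∈ nonsimpleButterfly 2 n) ∧
      numCycles (Theta n (true, π)) = k}.ncard = 2 ^ (2 ^ n - 1) * sBCount n k := by
    set T : (Fin 2 → Perm (Fin (2 ^ n))) ≃ (Fin 2 → Perm (Fin (2 ^ n))) :=
      { toFun := fun π => fun i => if i = 0 then π 0 else π 1 * π 0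
        invFun := fun g => fun i => if i = 0 then g 0 else g 1 * (g 0)⁻¹
        left_inv := by
          intro π; funext i; fin_cases i <;> simp [mul_inv_cancel_right]
        right_inv := by
          intro g; funext i; fin_cases i <;> simp [inv_mul_cancel_right] } with hT
    set A : Set (Fin 2 → Perm (Fin (2 ^ n))) := {g : Fin 2 → Perm (Fin (2 ^ n)) | ∀ i,
          g i ∈ (fun i : Fin 2 => if i = 0 then nonsimpleButterfly 2 n
            else {σ | σ ∈ nonsimpleButterfly 2 n ∧ numCycles σ = k}) i} with hA
    have hset : {π : Fin 2 → Perm (Fin (2 ^ n)) | (∀ i, π i ∈ nonsimpleButterfly 2 n) ∧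
        numCycles (Theta n (true, π)) = k} = T ⁻¹' A := by
      ext π
      simp only [hA, Set.mem_setOf_eq, Set.mem_preimage, Fin.forall_fin_two,
        numCycles_Theta_true, hT, Equiv.coe_fn_mk]
      norm_num
      constructor
      · rintro ⟨⟨h0, h1⟩, hc⟩
        exact ⟨h0, B_mul_mem n _ _ h1 h0, hc⟩
      · rintro ⟨h0, hmem, hc⟩
        refine ⟨⟨h0, ?_⟩, hc⟩
        have := B_mul_mem n _ _ hmem (B_inv_mem n _ h0)
        simpa [mul_inv_cancel_right] using this
    have hpre : T ⁻¹' A = T.symm '' A := by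
      rw [Equiv.image_eq_preimage_symm, Equiv.symm_symm]
    rw [hset, hpre, Set.ncard_image_of_injective _ T.symm.injective, hA, ncard_pi_fin_two]
    norm_num
    rw [ncard_B n]
    rfl
  show ({σ | σ ∈ nonsimpleButterfly 2 (n + 1) ∧ numCycles σ = k}).ncard = _
  rw [hmain, hfalse, htrue, Nat.add_comm]
end

section
/- For an integer m ≥ 3 define h_m : ℝ → ℝ by h_m(x) = 1/m + (1 − 1/m)·x^m. Then h_m has exactly one fixed point x_m* in the open interval (0,1), and this fixed point satisfies 1/m < x_m* < (m−1)^{−1/(m−1)}. Moreover, there exists a constant K > 0 such that 0 < x_m* − 1/m ≤ K·m^{−m} for all m ≥ 3. -/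
/-- `h_m(x) = 1/m + (1 − 1/m)·x^m`. -/
noncomputable def hFun (m : ℕ) (x : ℝ) : ℝ := 1 / (m : ℝ) + (1 - 1 / (m : ℝ)) * x ^ m

/-- Auxiliary polynomial: `q_m(x) = -1 + (m-1)·∑_{j=1}^{m-1} x^j`. -/
noncomputable def qFun (m : ℕ) (x : ℝ) : ℝ :=
  -1 + ((m : ℝ) - 1) * ∑ j ∈ Finset.range (m - 1), x ^ (j + 1)

lemma qKey (m : ℕ) (hm : 3 ≤ m) (x : ℝ) :
    (m : ℝ) * (hFun m x - x) = (x - 1) * qFun m x := by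
  obtain ⟨n, rfl⟩ : ∃ n, m = n + 1 := ⟨m - 1, (Nat.succ_pred_eq_of_pos (by omega)).symm⟩
  have hM : ((n : ℝ) + 1) ≠ 0 := by positivity
  have hgs : (∑ i ∈ Finset.range n, x ^ i) * (x - 1) = x ^ n - 1 := geom_sum_mul x n
  have hsum : ∑ j ∈ Finset.range n, x ^ (j + 1) = x * ∑ j ∈ Finset.range n, x ^ j := by
    rw [Finset.mul_sum]; exact Finset.sum_congr rfl fun j _ => by ring
  have hL : ((n : ℝ) + 1) * (hFun (n + 1) x - x)
      = 1 + (n : ℝ) * x ^ (n + 1) - ((n : ℝ) + 1) * x := by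
    rw [hFun]; push_cast; field_simp; ring
  have hR : (x - 1) * qFun (n + 1) x = 1 - x + (n : ℝ) * x * (x ^ n - 1) := by
    rw [qFun, Nat.add_sub_cancel, hsum]; push_cast
    linear_combination (n : ℝ) * x * hgs
  push_cast
  rw [hL, hR]; ring

lemma qFun_mono (m : ℕ) (hm : 3 ≤ m) {a b : ℝ} (ha : 0 ≤ a) (hab : a ≤ b) :
    qFun m a + ((m : ℝ) - 1) * (b - a) ≤ qFun m b := by
  have hM : (3 : ℝ) ≤ (m : ℝ) := by exact_mod_cast hm
  obtain ⟨k, hk⟩ : ∃ k, m - 1 = k + 1 := ⟨m - 2, by omega⟩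
  rw [qFun, qFun, hk, Finset.sum_range_succ', Finset.sum_range_succ']
  have h2 : ∑ j ∈ Finset.range k, a ^ (j + 1 + 1) ≤ ∑ j ∈ Finset.range k, b ^ (j + 1 + 1) :=
    Finset.sum_le_sum fun j _ => pow_le_pow_left₀ ha hab _
  have hM0 : (0 : ℝ) ≤ (m : ℝ) - 1 := by linarith
  simp only [Nat.zero_add, zero_add, pow_one]
  nlinarith [mul_le_mul_of_nonneg_left h2 hM0]

lemma qFun_inv (m : ℕ) (hm : 3 ≤ m) :
    qFun m (1 / (m : ℝ)) = -(m : ℝ) * ((m : ℝ) ^ m)⁻¹ := by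
  have hM : (3 : ℝ) ≤ (m : ℝ) := by exact_mod_cast hm
  have hM0 : (m : ℝ) ≠ 0 := by linarith
  have hMm : ((m : ℝ) ^ m) ≠ 0 := pow_ne_zero _ hM0
  have hk := qKey m hm (1 / (m : ℝ))
  have hne : (1 / (m : ℝ) - 1) ≠ 0 := by
    have : 1 / (m : ℝ) < 1 := by rw [div_lt_one (by linarith)]; linarith
    linarith
  apply mul_left_cancel₀ hne
  rw [← hk, hFun]
  have hpow : (1 / (m : ℝ)) ^ m = ((m : ℝ) ^ m)⁻¹ := by rw [one_div, inv_pow]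
  rw [hpow]
  field_simp
  ring

lemma fixed_iff (m : ℕ) (hm : 3 ≤ m) {x : ℝ} (hx : x ∈ Set.Ioo (0 : ℝ) 1) :
    hFun m x = x ↔ qFun m x = 0 := by
  have hM0 : (m : ℝ) ≠ 0 := by
    have : (3 : ℝ) ≤ (m : ℝ) := by exact_mod_cast hm
    linarith
  have hk := qKey m hm x
  constructor
  · intro h
    rw [h, sub_self, mul_zero] at hk
    rcases mul_eq_zero.1 hk.symm with h1 | h1
    · exact absurd h1 (by intro h1; have := hx.2; linarith [sub_eq_zero.1 h1])
    · exact h1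
  · intro h
    rw [h, mul_zero] at hk
    have := mul_eq_zero.1 hk
    rcases this with h1 | h1
    · exact absurd h1 hM0
    · linarith [sub_eq_zero.1 h1]

lemma qFun_exists_root (m : ℕ) (hm : 3 ≤ m) :
    ∃ x ∈ Set.Ioo (0 : ℝ) 1, qFun m x = 0 := by
  have hM : (3 : ℝ) ≤ (m : ℝ) := by exact_mod_cast hm
  have hcont : ContinuousOn (qFun m) (Set.Icc (0 : ℝ) 1) := by
    apply Continuous.continuousOn
    unfold qFun
    continuity
  have h0 : qFun m 0 = -1 := by
    simp [qFun]
  have h1 : (0 : ℝ) < qFun m 1 := by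
    have : qFun m 1 = -1 + ((m : ℝ) - 1) * (m - 1 : ℕ) := by simp [qFun]
    rw [this]
    have h2 : (2 : ℝ) ≤ ((m - 1 : ℕ) : ℝ) := by
      have : 2 ≤ m - 1 := by omega
      exact_mod_cast this
    nlinarith
  have hmem : (0 : ℝ) ∈ Set.Ioo (qFun m 0) (qFun m 1) := by
    rw [h0]; exact ⟨by norm_num, h1⟩
  obtain ⟨x, hx, hqx⟩ := intermediate_value_Ioo (by norm_num : (0:ℝ) ≤ 1) hcont hmem
  exact ⟨x, hx, hqx⟩

lemma qFun_root_unique (m : ℕ) (hm : 3 ≤ m) {a b : ℝ} (ha : a ∈ Set.Ioo (0 : ℝ) 1)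
    (hb : b ∈ Set.Ioo (0 : ℝ) 1) (hqa : qFun m a = 0) (hqb : qFun m b = 0) : a = b := by
  have hM : (3 : ℝ) ≤ (m : ℝ) := by exact_mod_cast hm
  rcases lt_trichotomy a b with h | h | h
  · have := qFun_mono m hm ha.1.le h.le
    nlinarith
  · exact h
  · have := qFun_mono m hm hb.1.le h.le
    nlinarith

lemma qFun_lower (m : ℕ) (hm : 3 ≤ m) {x : ℝ} (hx : x ∈ Set.Ioo (0 : ℝ) 1)
    (hqx : qFun m x = 0) : 1 / (m : ℝ) < x := by
  have hM : (3 : ℝ) ≤ (m : ℝ) := by exact_mod_cast hm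
  have hA : (0 : ℝ) < ((m : ℝ) ^ m)⁻¹ := by positivity
  have hqm : qFun m (1 / (m : ℝ)) = -(m : ℝ) * ((m : ℝ) ^ m)⁻¹ := qFun_inv m hm
  by_contra h
  push_neg at h
  have := qFun_mono m hm hx.1.le h
  rw [hqx, hqm] at this
  nlinarith

lemma qFun_upper (m : ℕ) (hm : 3 ≤ m) {x : ℝ} (hx : x ∈ Set.Ioo (0 : ℝ) 1)
    (hqx : qFun m x = 0) : x < ((m : ℝ) - 1) ^ (-(1 : ℝ) / ((m : ℝ) - 1)) := by
  have hM : (3 : ℝ) ≤ (m : ℝ) := by exact_mod_cast hm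
  have hM1 : (2 : ℝ) ≤ (m : ℝ) - 1 := by linarith
  set c : ℝ := ((m : ℝ) - 1) ^ (-(1 : ℝ) / ((m : ℝ) - 1)) with hc
  have hb0 : (0 : ℝ) < (m : ℝ) - 1 := by linarith
  have hb1 : (1 : ℝ) < (m : ℝ) - 1 := by linarith
  have hexp : -(1 : ℝ) / ((m : ℝ) - 1) < 0 := div_neg_of_neg_of_pos (by norm_num) hb0
  have hc0 : 0 < c := Real.rpow_pos_of_pos hb0 _
  have hc1 : c < 1 := Real.rpow_lt_one_of_one_lt_of_neg hb1 hexp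
  have hcast : ((m - 1 : ℕ) : ℝ) = (m : ℝ) - 1 := by
    have : 1 ≤ m := by omega
    push_cast [this]; ring
  have hcpow : c ^ (m - 1) = ((m : ℝ) - 1)⁻¹ := by
    rw [hc, ← Real.rpow_natCast (((m : ℝ) - 1) ^ (-(1 : ℝ) / ((m : ℝ) - 1))) (m - 1),
      ← Real.rpow_mul hb0.le, hcast]
    rw [div_mul_cancel₀ _ (by linarith : (m : ℝ) - 1 ≠ 0)]
    rw [Real.rpow_neg_one]
  have hgt : ((m : ℝ) - 1)⁻¹ < c := by
    rw [hc, ← Real.rpow_neg_one ((m : ℝ) - 1)]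
    apply (Real.rpow_lt_rpow_left_iff hb1).mpr
    rw [neg_div]
    have h1 : 1 / ((m : ℝ) - 1) < 1 := by rw [div_lt_one hb0]; linarith
    linarith
  -- show qFun m c > 0
  have hcm : c ^ m = ((m : ℝ) - 1)⁻¹ * c := by
    have h1 : c ^ m = c ^ (m - 1) * c := by
      rw [← pow_succ]; congr 1; omega
    rw [h1, hcpow]
  have hk := qKey m hm c
  have hneg : hFun m c - c < 0 := by
    rw [hFun, hcm]
    have h2 : 1 < c * ((m : ℝ) - 1) := by
      calc 1 = ((m : ℝ) - 1)⁻¹ * ((m : ℝ) - 1) := by field_simp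
      _ < c * ((m : ℝ) - 1) := by
        exact mul_lt_mul_of_pos_right hgt hb0
    have hM0 : (m : ℝ) ≠ 0 := by linarith
    have hM10 : (m : ℝ) - 1 ≠ 0 := by linarith
    have heq : 1 / (m : ℝ) + (1 - 1 / (m : ℝ)) * (((m : ℝ) - 1)⁻¹ * c) - c
        = (1 - c * ((m : ℝ) - 1)) / (m : ℝ) := by
      field_simp
      ring
    rw [heq]
    apply div_neg_of_neg_of_pos (by linarith) (by linarith)
  have hqc : 0 < qFun m c := by
    by_contra h
    push_neg at h
    have h1 : (0 : ℝ) ≤ (1 - c) * (-(qFun m c)) :=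
      mul_nonneg (by linarith) (by linarith)
    have h2 : (m : ℝ) * (hFun m c - c) < 0 :=
      mul_neg_of_pos_of_neg (by linarith) hneg
    nlinarith [hk]
  -- conclude
  by_contra h
  push_neg at h
  have := qFun_mono m hm hc0.le h
  nlinarith

/-- For `m ≥ 3`, `h_m` has exactly one fixed point `x_m*` in `(0,1)`, it satisfies
`1/m < x_m* < (m−1)^{−1/(m−1)}`, and there is a constant `K > 0` with
`0 < x_m* − 1/m ≤ K·m^{−m}` for all `m ≥ 3`. -/
theorem hFun_fixed_point :
    (∀ m : ℕ, 3 ≤ m → ∃! x : ℝ, x ∈ Set.Ioo (0 : ℝ) 1 ∧ hFun m x = x) ∧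
    (∀ m : ℕ, 3 ≤ m → ∀ x : ℝ, x ∈ Set.Ioo (0 : ℝ) 1 → hFun m x = x →
      1 / (m : ℝ) < x ∧ x < ((m : ℝ) - 1) ^ (-(1 : ℝ) / ((m : ℝ) - 1))) ∧
    (∃ K : ℝ, 0 < K ∧ ∀ m : ℕ, 3 ≤ m → ∀ x : ℝ, x ∈ Set.Ioo (0 : ℝ) 1 → hFun m x = x →
      0 < x - 1 / (m : ℝ) ∧ x - 1 / (m : ℝ) ≤ K * ((m : ℝ) ^ m)⁻¹) := by
  refine ⟨?_, ?_, ?_⟩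
  · intro m hm
    obtain ⟨x, hx, hqx⟩ := qFun_exists_root m hm
    refine ⟨x, ⟨hx, (fixed_iff m hm hx).2 hqx⟩, ?_⟩
    rintro y ⟨hy, hfy⟩
    exact qFun_root_unique m hm hy hx ((fixed_iff m hm hy).1 hfy) hqx
  · intro m hm x hx hfx
    have hqx := (fixed_iff m hm hx).1 hfx
    exact ⟨qFun_lower m hm hx hqx, qFun_upper m hm hx hqx⟩
  · refine ⟨2, by norm_num, ?_⟩
    intro m hm x hx hfx
    have hM : (3 : ℝ) ≤ (m : ℝ) := by exact_mod_cast hm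
    have hqx := (fixed_iff m hm hx).1 hfx
    have hlow := qFun_lower m hm hx hqx
    refine ⟨by linarith, ?_⟩
    have hA : (0 : ℝ) < ((m : ℝ) ^ m)⁻¹ := by positivity
    have hmono := qFun_mono m hm (by positivity : (0:ℝ) ≤ 1 / (m : ℝ)) hlow.le
    rw [hqx, qFun_inv m hm] at hmono
    nlinarith [mul_nonneg (by linarith : (0:ℝ) ≤ (m:ℝ) - 2) hA.le]
end
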